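/- Let P be a locally finite poset and k a field of characteristic 0. For every f ∈ C^n(P;k) (n ≥ 1), the map Φ is a cochain map: Φ(δf) = δ_H(Φf), where δ is the simplicial coboundary and δ_H is the Hochschild coboundary on multilinear maps (kP)^n → kP. -/

import Mathlib

/-!
STATEMENT 7: `Φ` is a cochain map: `Φ(δf) = δ_H(Φf)` for every `f ∈ C^n(P;k)`, `n ≥ 1`,
where `δ` is the simplicial coboundary and `δ_H` the Hochschild coboundary.
-/

open Finset

/-- The Hochschild coboundary:
`(δ_H F)(a_1, …, a_{n+1}) = a_1·F(a_2, …, a_{n+1}) + ∑_{t=1}^n (-1)^t F(a_1, …, a_t·a_{t+1}, …, a_{n+1})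
  + (-1)^{n+1} F(a_1, …, a_n)·a_{n+1}`. -/
def hCobound (k : Type*) [Field k] {A : Type*} [Ring A] [Algebra k A]
    (n : ℕ) (F : (Fin n → A) → A) : (Fin (n + 1) → A) → A :=
  fun a =>
    a 0 * F (fun s => a s.succ)
      + (∑ t : Fin n, (-1 : k) ^ ((t : ℕ) + 1) •
          F fun s =>
            if (s : ℕ) < (t : ℕ) then a s.castSucc
            else if s = t then a t.castSucc * a t.succ
            else a s.succ)
      + (-1 : k) ^ (n + 1) • (F (fun s => a s.castSucc) * a (Fin.last n))

section Incidence
variable (k : Type*) [Field k] (P : Type*) [PartialOrder P] [LocallyFiniteOrder P]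
  [DecidableEq P]

/-- A chain (simplex) of length `n` in the poset `P`: a monotone `(n+1)`-tuple. -/
abbrev SChain (n : ℕ) := {c : Fin (n + 1) → P // Monotone c}

open scoped Classical in
/-- The finset of monotone `(n+1)`-tuples from `x` to `y`. -/
noncomputable def chainTuples (n : ℕ) (x y : P) : Finset (Fin (n + 1) → P) :=
  (Fintype.piFinset fun _ => Finset.Icc x y).filter fun c =>
    Monotone c ∧ c 0 = x ∧ c (Fin.last n) = y

lemma chainTuples_mono {n : ℕ} {x y : P} {c : Fin (n + 1) → P}
    (hc : c ∈ chainTuples P n x y) : Monotone c := by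
  classical
  simp only [chainTuples, Finset.mem_filter] at hc
  exact hc.2.1

lemma le_of_mem_chainTuples {n : ℕ} {x y : P} {c : Fin (n + 1) → P}
    (hc : c ∈ chainTuples P n x y) : x ≤ y := by
  classical
  simp only [chainTuples, Finset.mem_filter] at hc
  exact hc.2.2.1 ▸ hc.2.2.2 ▸ hc.2.1 (Fin.zero_le _)

/-- The map `Φ` from simplicial `n`-cochains on `P` to Hochschild `n`-cochains of `kP`:
`(Φf)(a_1, …, a_n)(x, y) = ∑_{x = i₀ ≤ ⋯ ≤ iₙ = y} f(i₀, …, iₙ)·a_1(i₀,i₁)⋯aₙ(i_{n-1},iₙ)`. -/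
noncomputable def Phi (n : ℕ) (f : SChain P n → k) (a : Fin n → IncidenceAlgebra k P) :
    IncidenceAlgebra k P :=
  ⟨fun x y => ∑ c ∈ (chainTuples P n x y).attach,
      f ⟨c.1, chainTuples_mono P c.2⟩ * ∏ t : Fin n, a t (c.1 t.castSucc) (c.1 t.succ),
   fun x y hxy => by
    try dsimp only
    exact Finset.sum_eq_zero fun c _ => absurd (le_of_mem_chainTuples P c.2) hxy⟩

end Incidence

/-- The simplicial coboundary:
`(δf)(i_0, …, i_{n+1}) = ∑_{t=0}^{n+1} (-1)^t f(i_0, …, î_t, …, i_{n+1})`. -/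
def sCobound (k : Type*) [Field k] (P : Type*) [PartialOrder P]
    (n : ℕ) (f : SChain P n → k) : SChain P (n + 1) → k :=
  fun c => ∑ t : Fin (n + 2),
    (-1 : k) ^ (t : ℕ) *
      f ⟨fun s => c.1 (t.succAbove s), c.2.comp (Fin.strictMono_succAbove t).monotone⟩

namespace PhiAux

lemma fin_succAbove_val {N : ℕ} (T : Fin (N + 2)) (r : Fin (N + 1)) :
    ((T.succAbove r : Fin (N + 2)) : ℕ) = if (r : ℕ) < (T : ℕ) then (r : ℕ) else (r : ℕ) + 1 := by
  rcases lt_or_ge ((r : ℕ)) ((T : ℕ)) with h | h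
  · rw [Fin.succAbove_of_castSucc_lt _ _ (by simpa [Fin.lt_def] using h)]
    simp [h]
  · rw [Fin.succAbove_of_le_castSucc _ _ (by simpa [Fin.le_def] using h)]
    simp [Nat.not_lt.2 h]

/-- Non-dependent `insertNth`. -/
def insNth {N : ℕ} {α : Type*} (T : Fin (N + 2)) (w : α) (d : Fin (N + 1) → α) :
    Fin (N + 2) → α :=
  Fin.insertNth (α := fun _ => α) T w d

@[simp] lemma insNth_same {N : ℕ} {α : Type*} (T : Fin (N + 2)) (w : α) (d : Fin (N + 1) → α) :
    insNth T w d T = w := Fin.insertNth_apply_same (α := fun _ => α) T w d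

@[simp] lemma insNth_succAbove {N : ℕ} {α : Type*} (T : Fin (N + 2)) (w : α)
    (d : Fin (N + 1) → α) (j : Fin (N + 1)) :
    insNth T w d (T.succAbove j) = d j := Fin.insertNth_apply_succAbove (α := fun _ => α) T w d j

lemma insNth_self {N : ℕ} {α : Type*} (T : Fin (N + 2)) (c : Fin (N + 2) → α) :
    insNth T (c T) (fun s => c (T.succAbove s)) = c :=
  Fin.insertNth_self_removeNth (α := fun _ => α) T c

lemma insNth_lt {N : ℕ} {α : Type*} (T : Fin (N + 2)) (w : α) (d : Fin (N + 1) → α)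
    (v : Fin (N + 2)) (h : (v : ℕ) < (T : ℕ)) :
    insNth T w d v = d ⟨(v : ℕ), by have := T.isLt; omega⟩ := by
  have hv : v = T.succAbove ⟨(v : ℕ), by have := T.isLt; omega⟩ := by
    apply Fin.ext
    rw [fin_succAbove_val]
    dsimp only
    rw [if_pos h]
  conv_lhs => rw [hv]
  rw [insNth_succAbove]

lemma insNth_gt {N : ℕ} {α : Type*} (T : Fin (N + 2)) (w : α) (d : Fin (N + 1) → α)
    (v : Fin (N + 2)) (h : (T : ℕ) < (v : ℕ)) :
    insNth T w d v = d ⟨(v : ℕ) - 1, by have := v.isLt; omega⟩ := by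
  have hv : v = T.succAbove ⟨(v : ℕ) - 1, by have := v.isLt; omega⟩ := by
    apply Fin.ext
    rw [fin_succAbove_val]
    dsimp only
    rw [if_neg (by omega)]
    omega
  conv_lhs => rw [hv]
  rw [insNth_succAbove]

lemma monotone_insNth {N : ℕ} {P : Type*} [Preorder P] {T : Fin (N + 2)} {w : P}
    {d : Fin (N + 1) → P} (hd : Monotone d)
    (h1 : ∀ _ : 0 < (T : ℕ), d ⟨(T : ℕ) - 1, by have := T.isLt; omega⟩ ≤ w)
    (h2 : ∀ h : (T : ℕ) < N + 1, w ≤ d ⟨(T : ℕ), h⟩) :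
    Monotone (insNth T w d) := by
  intro v v' hvv'
  have hvv : (v : ℕ) ≤ (v' : ℕ) := hvv'
  rcases lt_trichotomy ((v : ℕ)) ((T : ℕ)) with hv | hv | hv <;>
    rcases lt_trichotomy ((v' : ℕ)) ((T : ℕ)) with hv' | hv' | hv'
  · rw [insNth_lt _ _ _ _ hv, insNth_lt _ _ _ _ hv']
    exact hd (Fin.mk_le_mk.2 hvv)
  · rw [insNth_lt _ _ _ _ hv, show v' = T from Fin.ext hv', insNth_same]
    exact (hd (Fin.mk_le_mk.2 (by omega))).trans (h1 (by omega))
  · rw [insNth_lt _ _ _ _ hv, insNth_gt _ _ _ _ hv']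
    exact hd (Fin.mk_le_mk.2 (by omega))
  · omega
  · rw [show v = T from Fin.ext hv, show v' = T from Fin.ext hv']
  · rw [show v = T from Fin.ext hv, insNth_same, insNth_gt _ _ _ _ hv']
    exact (h2 (by have := v'.isLt; omega)).trans (hd (Fin.mk_le_mk.2 (by omega)))
  · omega
  · omega
  · rw [insNth_gt _ _ _ _ hv, insNth_gt _ _ _ _ hv']
    exact hd (Fin.mk_le_mk.2 (by omega))

end PhiAux

set_option linter.unusedSectionVars false

namespace PhiAux
variable (k : Type*) [Field k] (P : Type*) [PartialOrder P] [LocallyFiniteOrder P]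
  [DecidableEq P]

lemma mem_chainTuples_iff {n : ℕ} {x y : P} {c : Fin (n + 1) → P} :
    c ∈ chainTuples P n x y ↔ Monotone c ∧ c 0 = x ∧ c (Fin.last n) = y := by
  classical
  constructor
  · intro hc
    exact (Finset.mem_filter.1 hc).2
  · rintro ⟨hm, h0, hl⟩
    refine Finset.mem_filter.2 ⟨Fintype.mem_piFinset.2 fun i => Finset.mem_Icc.2 ⟨?_, ?_⟩,
      hm, h0, hl⟩
    · exact h0 ▸ hm (Fin.zero_le i)
    · exact hl ▸ hm (Fin.le_last i)

open scoped Classical in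
/-- Extension of a cochain to all tuples, by zero on non-monotone ones. -/
noncomputable def fext {n : ℕ} (f : SChain P n → k) : (Fin (n + 1) → P) → k :=
  fun c => if h : Monotone c then f ⟨c, h⟩ else 0

lemma fext_of_monotone {n : ℕ} (f : SChain P n → k) {c : Fin (n + 1) → P} (h : Monotone c)
    (h' : Monotone c) : fext k P f c = f ⟨c, h'⟩ := by
  classical
  simp only [fext]
  rw [dif_pos h]

lemma Phi_apply (n : ℕ) (f : SChain P n → k) (a : Fin n → IncidenceAlgebra k P) (x y : P) :
    Phi k P n f a x y = ∑ c ∈ chainTuples P n x y,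
      fext k P f c * ∏ t : Fin n, a t (c t.castSucc) (c t.succ) := by
  have h0 : Phi k P n f a x y = ∑ c ∈ (chainTuples P n x y).attach,
      f ⟨c.1, chainTuples_mono P c.2⟩ * ∏ t : Fin n, a t (c.1 t.castSucc) (c.1 t.succ) := rfl
  rw [h0, ← Finset.sum_attach (chainTuples P n x y)
    (fun c => fext k P f c * ∏ t : Fin n, a t (c t.castSucc) (c t.succ))]
  refine Finset.sum_congr rfl fun c _ => ?_
  rw [fext_of_monotone k P f (chainTuples_mono P c.2) (chainTuples_mono P c.2)]

/-- Evaluation at a pair of points, as an additive monoid hom. -/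
def evalHom (x y : P) : IncidenceAlgebra k P →+ k where
  toFun F := F x y
  map_zero' := rfl
  map_add' _ _ := rfl

lemma sum_apply {ι : Type*} (s : Finset ι) (F : ι → IncidenceAlgebra k P) (x y : P) :
    (∑ i ∈ s, F i) x y = ∑ i ∈ s, F i x y :=
  map_sum (evalHom k P x y) F s

end PhiAux

namespace PhiAux
variable (k : Type*) [Field k] (P : Type*) [PartialOrder P] [LocallyFiniteOrder P]
  [DecidableEq P]
lemma sum_term_zero (n : ℕ) (f : SChain P n → k) (a : Fin (n + 1) → IncidenceAlgebra k P)
    (x y : P) :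
    ∑ c ∈ chainTuples P (n + 1) x y,
        fext k P f (fun s => c ((0 : Fin (n + 2)).succAbove s)) *
          ∏ s : Fin (n + 1), a s (c s.castSucc) (c s.succ)
      = (a 0 * Phi k P n f fun s => a s.succ) x y := by
  rw [IncidenceAlgebra.mul_apply]
  simp only [Phi_apply, Finset.mul_sum]
  rw [Finset.sum_sigma' (Finset.Icc x y) (fun z => chainTuples P n z y)]
  refine Finset.sum_bij' (fun c hc => ⟨c (Fin.succ 0), fun s => c s.succ⟩)
    (fun p hp => insNth 0 x p.2) ?_ ?_ ?_ ?_ ?_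
  · intro c hc
    obtain ⟨hm, h0, hl⟩ := (mem_chainTuples_iff P).1 hc
    refine Finset.mem_sigma.2 ⟨Finset.mem_Icc.2 ⟨h0 ▸ hm (Fin.zero_le _), hl ▸ hm (Fin.le_last _)⟩, ?_⟩
    refine (mem_chainTuples_iff P).2 ⟨hm.comp (Fin.strictMono_succ).monotone, rfl, ?_⟩
    show c (Fin.last n).succ = y
    rw [Fin.succ_last, hl]
  · intro p hp
    obtain ⟨hz, hd⟩ := Finset.mem_sigma.1 hp
    obtain ⟨hm, h0, hl⟩ := (mem_chainTuples_iff P).1 hd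
    refine (mem_chainTuples_iff P).2 ⟨?_, ?_, ?_⟩
    · refine monotone_insNth hm (fun h => absurd h (by simp)) (fun h => ?_)
      have : (⟨((0 : Fin (n + 2)) : ℕ), h⟩ : Fin (n + 1)) = 0 := by
        apply Fin.ext; simp
      rw [this, h0]
      exact (Finset.mem_Icc.1 hz).1
    · exact insNth_same 0 x p.2
    · rw [insNth_gt _ _ _ _ (by simp [Fin.last]), show (⟨((Fin.last (n+1) : Fin (n+2)) : ℕ) - 1,
        by simp [Fin.last]⟩ : Fin (n + 1)) = Fin.last n from Fin.ext (by simp [Fin.last]), hl]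
  · intro c hc
    dsimp only
    obtain ⟨hm, h0, hl⟩ := (mem_chainTuples_iff P).1 hc
    have := insNth_self (0 : Fin (n + 2)) c
    rw [show c ((0 : Fin (n+2))) = x from h0] at this
    simpa using this
  · intro p hp
    obtain ⟨hz, hd⟩ := Finset.mem_sigma.1 hp
    obtain ⟨hm, h0, hl⟩ := (mem_chainTuples_iff P).1 hd
    refine Sigma.ext ?_ (heq_of_eq ?_)
    · show insNth 0 x p.2 (Fin.succ 0) = p.1
      rw [insNth_gt _ _ _ _ (by simp), ← h0]
      exact congrArg p.2 (Fin.ext (by simp))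
    · show (fun s => insNth 0 x p.2 s.succ) = p.2
      funext s
      rw [insNth_gt _ _ _ _ (by simp)]
      exact congrArg p.2 (Fin.ext (by simp))
  · intro c hc
    dsimp only
    obtain ⟨hm, h0, hl⟩ := (mem_chainTuples_iff P).1 hc
    rw [Fin.prod_univ_succ]
    have e1 : (fun s => c ((0 : Fin (n + 2)).succAbove s)) = fun s : Fin (n+1) => c s.succ := by
      funext s; rw [Fin.succAbove_zero]
    have e2 : ∀ s : Fin n, c s.succ.castSucc = c s.castSucc.succ := by
      intro s; rw [Fin.succ_castSucc]
    rw [e1]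
    simp only [Fin.castSucc_zero, h0, e2]
    ring

lemma sum_term_last (n : ℕ) (f : SChain P n → k) (a : Fin (n + 1) → IncidenceAlgebra k P)
    (x y : P) :
    ∑ c ∈ chainTuples P (n + 1) x y,
        fext k P f (fun s => c ((Fin.last (n + 1)).succAbove s)) *
          ∏ s : Fin (n + 1), a s (c s.castSucc) (c s.succ)
      = ((Phi k P n f fun s => a s.castSucc) * a (Fin.last n)) x y := by
  rw [IncidenceAlgebra.mul_apply]
  simp only [Phi_apply, Finset.sum_mul]
  rw [Finset.sum_sigma' (Finset.Icc x y) (fun z => chainTuples P n x z)]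
  refine Finset.sum_bij' (fun c hc => ⟨c (Fin.last n).castSucc, fun s => c s.castSucc⟩)
    (fun p hp => insNth (Fin.last (n + 1)) y p.2) ?_ ?_ ?_ ?_ ?_
  · intro c hc
    obtain ⟨hm, h0, hl⟩ := (mem_chainTuples_iff P).1 hc
    refine Finset.mem_sigma.2 ⟨Finset.mem_Icc.2 ⟨h0 ▸ hm (Fin.zero_le _), hl ▸ hm (Fin.le_last _)⟩, ?_⟩
    refine (mem_chainTuples_iff P).2 ⟨hm.comp Fin.strictMono_castSucc.monotone, ?_, rfl⟩
    show c (0 : Fin (n + 1)).castSucc = x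
    rw [Fin.castSucc_zero, h0]
  · intro p hp
    obtain ⟨hz, hd⟩ := Finset.mem_sigma.1 hp
    obtain ⟨hm, h0, hl⟩ := (mem_chainTuples_iff P).1 hd
    refine (mem_chainTuples_iff P).2 ⟨?_, ?_, ?_⟩
    · refine monotone_insNth hm (fun h => ?_) (fun h => absurd h (by simp))
      have e : (⟨((Fin.last (n + 1) : Fin (n + 2)) : ℕ) - 1, by simp⟩ : Fin (n + 1))
          = Fin.last n := Fin.ext (by simp)
      rw [e, hl]
      exact (Finset.mem_Icc.1 hz).2
    · rw [insNth_lt _ _ _ _ (by simp), show (⟨((0 : Fin (n + 2)) : ℕ), by simp⟩ : Fin (n + 1))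
        = 0 from Fin.ext (by simp), h0]
    · exact insNth_same _ y p.2
  · intro c hc
    dsimp only
    obtain ⟨hm, h0, hl⟩ := (mem_chainTuples_iff P).1 hc
    have h := insNth_self (Fin.last (n + 1)) c
    rw [hl] at h
    have e : (fun s => c ((Fin.last (n + 1)).succAbove s)) = fun s : Fin (n + 1) => c s.castSucc := by
      funext s; rw [Fin.succAbove_last]
    rw [e] at h
    exact h
  · intro p hp
    obtain ⟨hz, hd⟩ := Finset.mem_sigma.1 hp
    obtain ⟨hm, h0, hl⟩ := (mem_chainTuples_iff P).1 hd
    refine Sigma.ext ?_ (heq_of_eq ?_)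
    · show insNth (Fin.last (n + 1)) y p.2 (Fin.last n).castSucc = p.1
      rw [insNth_lt _ _ _ _ (by simp), ← hl]
      exact congrArg p.2 (Fin.ext (by simp))
    · show (fun s => insNth (Fin.last (n + 1)) y p.2 s.castSucc) = p.2
      funext s
      rw [insNth_lt _ _ _ _ (by have := s.isLt; simp [Fin.lt_def]; omega)]
      exact congrArg p.2 (Fin.ext (by simp))
  · intro c hc
    dsimp only
    obtain ⟨hm, h0, hl⟩ := (mem_chainTuples_iff P).1 hc
    rw [Fin.prod_univ_castSucc]
    have e1 : (fun s => c ((Fin.last (n + 1)).succAbove s))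
        = fun s : Fin (n + 1) => c s.castSucc := by
      funext s; rw [Fin.succAbove_last]
    have e2 : ∀ s : Fin n, c s.castSucc.succ = c s.succ.castSucc := by
      intro s; rw [Fin.succ_castSucc]
    have e3 : c (Fin.last n).succ = y := by rw [Fin.succ_last, hl]
    rw [e1]
    simp only [e2, e3]
    ring

lemma sum_term_mid (n : ℕ) (f : SChain P n → k) (a : Fin (n + 1) → IncidenceAlgebra k P)
    (x y : P) (j : Fin n) :
    ∑ c ∈ chainTuples P (n + 1) x y,
        fext k P f (fun s => c ((j.castSucc.succ).succAbove s)) *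
          ∏ s : Fin (n + 1), a s (c s.castSucc) (c s.succ)
      = Phi k P n f (fun s =>
          if (s : ℕ) < (j : ℕ) then a s.castSucc
          else if s = j then a j.castSucc * a j.succ
          else a s.succ) x y := by
  obtain ⟨m, rfl⟩ : ∃ m, n = m + 1 := ⟨n - 1, by have := j.pos; omega⟩
  rw [Phi_apply]
  set A : Fin (m + 1) → IncidenceAlgebra k P := fun s =>
    if (s : ℕ) < (j : ℕ) then a s.castSucc
    else if s = j then a j.castSucc * a j.succ
    else a s.succ with hA
  have hT : ((j.castSucc.succ : Fin (m + 3)) : ℕ) = (j : ℕ) + 1 := by simp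
  have hAj : ∀ u v : P, A j u v = ∑ w ∈ Finset.Icc u v,
      a j.castSucc u w * a j.succ w v := by
    intro u v
    rw [hA]
    dsimp only
    rw [if_neg (lt_irrefl _), if_pos rfl, IncidenceAlgebra.mul_apply]
  have hR : (∑ d ∈ chainTuples P (m + 1) x y,
        fext k P f d * ∏ t : Fin (m + 1), A t (d t.castSucc) (d t.succ))
      = ∑ p ∈ (chainTuples P (m + 1) x y).sigma
          (fun d => Finset.Icc (d j.castSucc) (d j.succ)),
          fext k P f p.1 *
            (a j.castSucc (p.1 j.castSucc) p.2 * a j.succ p.2 (p.1 j.succ) *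
              ∏ i : Fin m, A (j.succAbove i)
                (p.1 (j.succAbove i).castSucc) (p.1 (j.succAbove i).succ)) := by
    rw [Finset.sum_sigma]
    refine Finset.sum_congr rfl fun d hd => ?_
    rw [Fin.prod_univ_succAbove (fun t => A t (d t.castSucc) (d t.succ)) j]
    dsimp only
    rw [hAj, Finset.sum_mul, Finset.mul_sum]
  rw [hR]
  refine Finset.sum_bij'
    (fun c hc => ⟨fun s => c ((j.castSucc.succ).succAbove s), c (j.castSucc.succ)⟩)
    (fun p hp => insNth (j.castSucc.succ) p.2 p.1) ?_ ?_ ?_ ?_ ?_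
  · intro c hc
    obtain ⟨hm, h0, hl⟩ := (mem_chainTuples_iff P).1 hc
    refine Finset.mem_sigma.2 ⟨?_, ?_⟩
    · refine (mem_chainTuples_iff P).2
        ⟨hm.comp (Fin.strictMono_succAbove _).monotone, ?_, ?_⟩
      · show c ((j.castSucc.succ).succAbove 0) = x
        rw [show (j.castSucc.succ : Fin (m + 3)).succAbove 0 = 0 from Fin.ext
          (by simp only [fin_succAbove_val, hT, Fin.val_zero]; rw [if_pos (by omega)]), h0]
      · show c ((j.castSucc.succ).succAbove (Fin.last (m + 1))) = y
        rw [show (j.castSucc.succ : Fin (m + 3)).succAbove (Fin.last (m + 1))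
            = Fin.last (m + 2) from Fin.ext (by
          simp only [fin_succAbove_val, hT, Fin.val_last]
          rw [if_neg (by have := j.isLt; omega)]), hl]
    · refine Finset.mem_Icc.2 ⟨hm ?_, hm ?_⟩
      · rw [Fin.le_def, fin_succAbove_val]
        simp only [hT, Fin.coe_castSucc]
        rw [if_pos (by omega)]
        omega
      · rw [Fin.le_def, fin_succAbove_val]
        simp only [hT, Fin.val_succ]
        rw [if_neg (by omega)]
        omega
  · intro p hp
    obtain ⟨hd, hw⟩ := Finset.mem_sigma.1 hp
    obtain ⟨hm, h0, hl⟩ := (mem_chainTuples_iff P).1 hd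
    refine (mem_chainTuples_iff P).2
      ⟨monotone_insNth hm (fun h => ?_) (fun h => ?_), ?_, ?_⟩
    · refine le_trans (le_of_eq (congrArg p.1 (Fin.ext ?_))) (Finset.mem_Icc.1 hw).1
      simp [hT]
    · refine le_trans (Finset.mem_Icc.1 hw).2 (le_of_eq (congrArg p.1 (Fin.ext ?_)))
      simp [hT]
    · rw [insNth_lt _ _ _ _ (by simp only [Fin.val_zero, hT]; omega)]
      exact (congrArg p.1 (Fin.ext (by simp))).trans h0
    · rw [insNth_gt _ _ _ _ (by simp only [Fin.val_last, hT]; have := j.isLt; omega)]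
      exact (congrArg p.1 (Fin.ext (by simp [hT]))).trans hl
  · intro c hc
    dsimp only
    exact insNth_self _ c
  · intro p hp
    refine Sigma.ext ?_ (heq_of_eq ?_)
    · funext s
      exact insNth_succAbove _ _ _ s
    · exact insNth_same _ _ _
  · intro c hc
    try dsimp only
    rw [Fin.prod_univ_succAbove (fun s => a s (c s.castSucc) (c s.succ)) j.castSucc]
    try dsimp only
    rw [Fin.prod_univ_succAbove (fun i => a (j.castSucc.succAbove i)
      (c (j.castSucc.succAbove i).castSucc) (c (j.castSucc.succAbove i).succ)) j]
    try dsimp only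
    rw [show (j.castSucc.succAbove j : Fin (m + 2)) = j.succ from Fin.ext (by
      rw [fin_succAbove_val]; simp only [Fin.coe_castSucc, Fin.val_succ]
      rw [if_neg (by omega)])]
    rw [show ((j.castSucc.succ : Fin (m + 3)).succAbove j.castSucc) = j.castSucc.castSucc
      from Fin.ext (by rw [fin_succAbove_val]; simp only [hT, Fin.coe_castSucc]
                       rw [if_pos (by omega)])]
    rw [show ((j.castSucc.succ : Fin (m + 3)).succAbove j.succ) = j.succ.succ
      from Fin.ext (by rw [fin_succAbove_val]; simp only [hT, Fin.val_succ]
                       rw [if_neg (by omega)])]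
    rw [show (j.succ.castSucc : Fin (m + 3)) = j.castSucc.succ from Fin.ext (by simp)]
    have hrest : ∀ i : Fin m,
        a (j.castSucc.succAbove (j.succAbove i))
            (c (j.castSucc.succAbove (j.succAbove i)).castSucc)
            (c (j.castSucc.succAbove (j.succAbove i)).succ)
          = A (j.succAbove i)
              (c ((j.castSucc.succ).succAbove (j.succAbove i).castSucc))
              (c ((j.castSucc.succ).succAbove (j.succAbove i).succ)) := by
      intro i
      have hne : j.succAbove i ≠ j := Fin.succAbove_ne j i
      rcases hne.lt_or_gt with hu | hu
      · have hu' : ((j.succAbove i : Fin (m + 1)) : ℕ) < (j : ℕ) := hu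
        have eA : A (j.succAbove i) = a (j.succAbove i).castSucc := by
          rw [hA]
          dsimp only
          rw [if_pos hu']
        have ev : j.castSucc.succAbove (j.succAbove i) = (j.succAbove i).castSucc :=
          Fin.ext (by rw [fin_succAbove_val]; simp only [Fin.coe_castSucc]
                      rw [if_pos hu'])
        have ec1 : (j.castSucc.succ : Fin (m + 3)).succAbove (j.succAbove i).castSucc
            = (j.succAbove i).castSucc.castSucc :=
          Fin.ext (by rw [fin_succAbove_val]; simp only [hT, Fin.coe_castSucc]
                      rw [if_pos (by omega)])
        have ec2 : (j.castSucc.succ : Fin (m + 3)).succAbove (j.succAbove i).succ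
            = (j.succAbove i).castSucc.succ :=
          Fin.ext (by rw [fin_succAbove_val]; simp only [hT, Fin.val_succ, Fin.coe_castSucc]
                      rw [if_pos (by omega)])
        rw [ev, eA, ec1, ec2]
      · have hu' : (j : ℕ) < ((j.succAbove i : Fin (m + 1)) : ℕ) := hu
        have eA : A (j.succAbove i) = a (j.succAbove i).succ := by
          rw [hA]
          dsimp only
          rw [if_neg (by omega), if_neg hne]
        have ev : j.castSucc.succAbove (j.succAbove i) = (j.succAbove i).succ :=
          Fin.ext (by rw [fin_succAbove_val]; simp only [Fin.coe_castSucc, Fin.val_succ]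
                      rw [if_neg (by omega)])
        have ec1 : (j.castSucc.succ : Fin (m + 3)).succAbove (j.succAbove i).castSucc
            = (j.succAbove i).succ.castSucc :=
          Fin.ext (by rw [fin_succAbove_val]; simp only [hT, Fin.coe_castSucc, Fin.val_succ]
                      rw [if_neg (by omega)])
        have ec2 : (j.castSucc.succ : Fin (m + 3)).succAbove (j.succAbove i).succ
            = (j.succAbove i).succ.succ :=
          Fin.ext (by rw [fin_succAbove_val]; simp only [hT, Fin.val_succ]
                      rw [if_neg (by omega)])
        rw [ev, eA, ec1, ec2]
    rw [Finset.prod_congr rfl fun i _ => hrest i]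
    ring

end PhiAux

theorem phi_is_cochain_map
    (k : Type*) [Field k] [CharZero k]
    (P : Type*) [PartialOrder P] [LocallyFiniteOrder P] [DecidableEq P]
    (n : ℕ) (hn : 1 ≤ n) (f : SChain P n → k) :
    Phi k P (n + 1) (sCobound k P n f) = hCobound k n (Phi k P n f) := by
  funext a
  refine IncidenceAlgebra.ext fun x y hxy => ?_
  rw [PhiAux.Phi_apply]
  have hstep : ∀ c ∈ chainTuples P (n + 1) x y,
      PhiAux.fext k P (sCobound k P n f) c *
          ∏ s : Fin (n + 1), a s (c s.castSucc) (c s.succ)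
        = ∑ t : Fin (n + 2), ((-1 : k) ^ (t : ℕ) *
            PhiAux.fext k P f (fun s => c (t.succAbove s))) *
            ∏ s : Fin (n + 1), a s (c s.castSucc) (c s.succ) := by
    intro c hc
    have hmc := chainTuples_mono P hc
    rw [PhiAux.fext_of_monotone k P _ hmc hmc]
    show (∑ t : Fin (n + 2), (-1 : k) ^ (t : ℕ) *
        f ⟨fun s => c (t.succAbove s), hmc.comp (Fin.strictMono_succAbove t).monotone⟩) * _ = _
    rw [Finset.sum_mul]
    refine Finset.sum_congr rfl fun t _ => ?_
    congr 1
    congr 1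
    exact (PhiAux.fext_of_monotone k P f (hmc.comp (Fin.strictMono_succAbove t).monotone)
      (hmc.comp (Fin.strictMono_succAbove t).monotone)).symm
  rw [Finset.sum_congr rfl hstep, Finset.sum_comm, Fin.sum_univ_succ, Fin.sum_univ_castSucc]
  -- t = 0 piece
  have h0 : (∑ c ∈ chainTuples P (n + 1) x y,
      ((-1 : k) ^ ((0 : Fin (n + 2)) : ℕ) *
          PhiAux.fext k P f (fun s => c ((0 : Fin (n + 2)).succAbove s))) *
        ∏ s : Fin (n + 1), a s (c s.castSucc) (c s.succ))
      = (a 0 * Phi k P n f fun s => a s.succ) x y := by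
    rw [← PhiAux.sum_term_zero k P n f a x y]
    refine Finset.sum_congr rfl fun c _ => ?_
    simp only [Fin.val_zero, pow_zero, one_mul]
  -- middle pieces
  have hmid : ∀ i : Fin n, (∑ c ∈ chainTuples P (n + 1) x y,
      ((-1 : k) ^ ((i.castSucc.succ : Fin (n + 2)) : ℕ) *
          PhiAux.fext k P f (fun s => c ((i.castSucc.succ).succAbove s))) *
        ∏ s : Fin (n + 1), a s (c s.castSucc) (c s.succ))
      = (-1 : k) ^ ((i : ℕ) + 1) *
          Phi k P n f (fun s =>
            if (s : ℕ) < (i : ℕ) then a s.castSucc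
            else if s = i then a i.castSucc * a i.succ
            else a s.succ) x y := by
    intro i
    have hv : ((i.castSucc.succ : Fin (n + 2)) : ℕ) = (i : ℕ) + 1 := by simp
    simp only [hv, mul_assoc]
    rw [← Finset.mul_sum, PhiAux.sum_term_mid k P n f a x y i]
  -- last piece
  have hlast : (∑ c ∈ chainTuples P (n + 1) x y,
      ((-1 : k) ^ (((Fin.last n).succ : Fin (n + 2)) : ℕ) *
          PhiAux.fext k P f (fun s => c (((Fin.last n).succ).succAbove s))) *
        ∏ s : Fin (n + 1), a s (c s.castSucc) (c s.succ))
      = (-1 : k) ^ (n + 1) *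
          ((Phi k P n f fun s => a s.castSucc) * a (Fin.last n)) x y := by
    have he : (Fin.last n).succ = Fin.last (n + 1) := Fin.succ_last n
    simp only [he, Fin.val_last, mul_assoc]
    rw [← Finset.mul_sum, PhiAux.sum_term_last k P n f a x y]
  rw [h0, hlast, Finset.sum_congr rfl fun i _ => hmid i]
  simp only [hCobound]
  rw [IncidenceAlgebra.add_apply, IncidenceAlgebra.add_apply, PhiAux.sum_apply]
  simp only [IncidenceAlgebra.constSMul_apply, smul_eq_mul]
  ring
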